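/- Let 𝒜 be a finite arrangement of hyperplanes H_{ij}^a (a > 0) with multigraph G, r a point of the complement with label λ_r, and f a G-parking function with λ_r(i) ≤ f(i) for all i and I := {i : f(i) > λ_r(i)} non-empty. Suppose no hyperplane H_{pq}^a with p,q ∈ I separates r from the origin. Then not all hyperplanes H_{ij}^a with i ∈ I, j ∉ I lie between r and the origin; i.e., there exists H_{ij}^a ∈ 𝒜 with i ∈ I, j ∉ I and r_i - r_j < a. -/

import Mathlib

open scoped Classical

/-- If `f` is a `G_𝒜`-parking function with `λ_r ≤ f`, the set
`I = {i : f i > λ_r i}` is non-empty, and no hyperplane `H_{pq}^a` with `p,q ∈ I`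
separates `r` from the origin, then some hyperplane `H_{ij}^a` with `i ∈ I`,
`j ∉ I` does not lie between `r` and the origin. -/
theorem stmt11 (n : ℕ) (A : Finset (Fin n × Fin n × ℝ))
    (hpos : ∀ h ∈ A, 0 < h.2.2)
    (r : Fin n → ℝ)
    (hcompl : ∀ h ∈ A, r h.1 - r h.2.1 ≠ h.2.2)
    (f : Fin n → ℕ)
    (hpark : ∀ I : Finset (Fin n), I.Nonempty →
      ∃ i ∈ I, f i ≤ ∑ j ∈ Iᶜ, (A.filter (fun h => h.1 = i ∧ h.2.1 = j)).card)
    (hle : ∀ i, (A.filter (fun h => h.1 = i ∧ r h.1 - r h.2.1 > h.2.2)).card ≤ f i)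
    (I : Finset (Fin n))
    (hIdef : I = Finset.univ.filter fun i =>
      (A.filter (fun h => h.1 = i ∧ r h.1 - r h.2.1 > h.2.2)).card < f i)
    (hIne : I.Nonempty)
    (hsep : ∀ h ∈ A, h.1 ∈ I → h.2.1 ∈ I → r h.1 - r h.2.1 < h.2.2) :
    ∃ h ∈ A, h.1 ∈ I ∧ h.2.1 ∉ I ∧ r h.1 - r h.2.1 < h.2.2 := by
  by_contra hcon
  push_neg at hcon
  obtain ⟨i, hiI, hfle⟩ := hpark I hIne
  have hilam : (A.filter (fun h => h.1 = i ∧ r h.1 - r h.2.1 > h.2.2)).card < f i := by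
    rw [hIdef] at hiI
    simpa using hiI
  have key : ∑ j ∈ Iᶜ, (A.filter (fun h => h.1 = i ∧ h.2.1 = j)).card
      ≤ (A.filter (fun h => h.1 = i ∧ r h.1 - r h.2.1 > h.2.2)).card := by
    rw [← Finset.card_biUnion]
    · apply Finset.card_le_card
      intro h hh
      simp only [Finset.mem_biUnion, Finset.mem_filter, Finset.mem_compl] at hh ⊢
      obtain ⟨j, hjI, hhA, h1, h2⟩ := hh
      refine ⟨hhA, h1, ?_⟩
      have hj : h.2.1 ∉ I := h2 ▸ hjI
      have hge := hcon h hhA (h1 ▸ hiI) hj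
      exact lt_of_le_of_ne hge (Ne.symm (hcompl h hhA))
    · intro j _ k _ hjk
      rw [Function.onFun, Finset.disjoint_left]
      intro h hhj hhk
      simp only [Finset.mem_filter] at hhj hhk
      exact hjk (hhj.2.2 ▸ hhk.2.2)
  have := hfle.trans key
  omega
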